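/- (The Schiemann bound is O of the discriminant) Let f = Σ_{1≤i≤j≤3} a_ij X_i X_j be a positive definite integral ternary quadratic form that is reduced. Then min{ −a₁₁/14 + 18a₂₂/7 + a₃₃, 3a₁₁/2 − 5a₂₂/6 + 17a₃₃/6, 13a₁₁/5 + a₂₂ + a₃₃, 7a₃₃/2 } ≤ 7 · det G_f. (For reduced forms the successive minima are a₁₁ ≤ a₂₂ ≤ a₃₃, so this shows the bound b(f) in Schiemann's theorem grows at most linearly in the discriminant; in particular for forms of discriminant −p the bound is O(p).) -/

import Mathlib

/-- An integral ternary quadratic form `f = Σ_{1 ≤ i ≤ j ≤ 3} aᵢⱼ Xᵢ Xⱼ`,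
recorded by its six coefficients. -/
structure TQF where
  a11 : ℤ
  a22 : ℤ
  a33 : ℤ
  a12 : ℤ
  a13 : ℤ
  a23 : ℤ

namespace TQF

/-- The value of the form at `x ∈ ℤ³`. -/
def eval (f : TQF) (x : Fin 3 → ℤ) : ℤ :=
  f.a11 * x 0 ^ 2 + f.a22 * x 1 ^ 2 + f.a33 * x 2 ^ 2
    + f.a12 * x 0 * x 1 + f.a13 * x 0 * x 2 + f.a23 * x 1 * x 2

/-- Positive definiteness: `f(x) > 0` for every nonzero `x ∈ ℤ³`. -/
def PosDef (f : TQF) : Prop := ∀ x : Fin 3 → ℤ, x ≠ 0 → 0 < f.eval x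

/-- The (rational, symmetric) Gram matrix of `f`. -/
def gram (f : TQF) : Matrix (Fin 3) (Fin 3) ℚ :=
  !![(f.a11 : ℚ), (f.a12 : ℚ) / 2, (f.a13 : ℚ) / 2;
     (f.a12 : ℚ) / 2, (f.a22 : ℚ), (f.a23 : ℚ) / 2;
     (f.a13 : ℚ) / 2, (f.a23 : ℚ) / 2, (f.a33 : ℚ)]

/-- Integral equivalence of ternary forms: `f(Tx) = g(x)` for some `T ∈ GL₃(ℤ)`. -/
def EquivForm (f g : TQF) : Prop :=
  ∃ T : Matrix (Fin 3) (Fin 3) ℤ, IsUnit T.det ∧ ∀ x : Fin 3 → ℤ, f.eval (T.mulVec x) = g.eval x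

/-- `f` represents a value `≤ t` by `k` linearly independent vectors of `ℤ³`. -/
def MinBound (f : TQF) (k : ℕ) (t : ℤ) : Prop :=
  ∃ v : Fin k → (Fin 3 → ℤ), LinearIndependent ℤ v ∧ ∀ i, f.eval (v i) ≤ t

/-- `t` is the `k`-th successive minimum of `f`: the least integer `t` such that there
are `k` linearly independent vectors `x ∈ ℤ³` with `f(x) ≤ t`. -/
def IsSuccMin (f : TQF) (k : ℕ) (t : ℤ) : Prop :=
  f.MinBound k t ∧ ∀ t' : ℤ, f.MinBound k t' → t ≤ t'

/-- The representation number `r(f, ℓ) = #{x ∈ ℤ³ : f(x) = ℓ}`. -/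
noncomputable def repNumber (f : TQF) (ℓ : ℤ) : ℕ :=
  {x : Fin 3 → ℤ | f.eval x = ℓ}.ncard

/-- `f` is reduced (Eichler/Seeber reduction conditions). -/
def Reduced (f : TQF) : Prop :=
  (∀ x : Fin 3 → ℤ, Int.gcd (x 0) (Int.gcd (x 1) (x 2)) = 1 → f.a11 ≤ f.eval x) ∧
  (∀ x : Fin 3 → ℤ, Int.gcd (x 1) (x 2) = 1 → f.a22 ≤ f.eval x) ∧
  (∀ x : Fin 3 → ℤ, (x 2).natAbs = 1 → f.a33 ≤ f.eval x) ∧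
  0 ≤ f.a12 ∧ 0 ≤ f.a13 ∧ ((f.a12 = 0 ∨ f.a13 = 0) → 0 ≤ f.a23) ∧
  (f.a11 = f.a22 → |f.a23| ≤ f.a13) ∧
  (f.a22 = f.a33 → f.a13 ≤ f.a12)

end TQF

/-- **The Schiemann bound is `O(det)`.** For a reduced positive definite integral ternary
quadratic form `f` (whose successive minima are `a₁₁ ≤ a₂₂ ≤ a₃₃`), the Schiemann bound
`min{−a₁₁/14 + 18a₂₂/7 + a₃₃, 3a₁₁/2 − 5a₂₂/6 + 17a₃₃/6, 13a₁₁/5 + a₂₂ + a₃₃, 7a₃₃/2}`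
is at most `7·det G_f`. -/
private lemma schiemann_key (p q r u v w : ℤ) (hp : 0 ≤ p) (hpq : p ≤ q) (hqr : q ≤ r)
    (hu0 : 0 ≤ u) (hup : u ≤ p) (hv0 : 0 ≤ v) (hvp : v ≤ p)
    (hw1 : -q ≤ w) (hw2 : w ≤ q) (hL : u + v - w ≤ p + q) :
    p*w^2 + q*v^2 + r*u^2 ≤ 2*p*q*r + u*v*w := by
  have hA : (0:ℤ) ≤ q - p := by linarith
  have hB : (0:ℤ) ≤ r - q := by linarith
  have hD : (0:ℤ) ≤ p - u := by linarith
  have hF : (0:ℤ) ≤ p - v := by linarith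
  have hG : (0:ℤ) ≤ q - w := by linarith
  have hH : (0:ℤ) ≤ q + w := by linarith
  have hLs : (0:ℤ) ≤ p + q + w - u - v := by linarith
  have hq : (0:ℤ) ≤ q := by linarith
  have hr : (0:ℤ) ≤ r := by linarith
  nlinarith [mul_nonneg (mul_nonneg hp hB) hD, mul_nonneg (mul_nonneg hD hG) hH,
    mul_nonneg (mul_nonneg hu0 hG) hLs, mul_nonneg (mul_nonneg hv0 hA) hF,
    mul_nonneg (mul_nonneg hp hv0) hF, mul_nonneg (mul_nonneg hp hr) hA,
    mul_nonneg (mul_nonneg hu0 hB) hD, mul_nonneg (mul_nonneg hp hG) hLs,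
    mul_nonneg (mul_nonneg hp hq) hB, mul_nonneg (mul_nonneg hu0 hD) hH,
    mul_nonneg (mul_nonneg hD hF) hH]

theorem schiemann_bound_linear_in_disc (f : TQF) (hf : f.PosDef) (hred : f.Reduced) :
    min (min (-(f.a11 : ℚ) / 14 + 18 * (f.a22 : ℚ) / 7 + (f.a33 : ℚ))
             (3 * (f.a11 : ℚ) / 2 - 5 * (f.a22 : ℚ) / 6 + 17 * (f.a33 : ℚ) / 6))
        (min (13 * (f.a11 : ℚ) / 5 + (f.a22 : ℚ) + (f.a33 : ℚ)) (7 * (f.a33 : ℚ) / 2))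
      ≤ 7 * f.gram.det := by
  obtain ⟨h1, h2, h3, hu0, hv0, -, -, -⟩ := hred
  have hp0 : 0 < f.a11 := by
    have := hf ![1,0,0] (by intro h; simpa using congrFun h 0)
    simpa [TQF.eval] using this
  have hpq : f.a11 ≤ f.a22 := by
    have := h1 ![0,1,0] (by simp)
    simpa [TQF.eval] using this
  have hqr : f.a22 ≤ f.a33 := by
    have := h2 ![0,0,1] (by simp)
    simpa [TQF.eval] using this
  have hup : f.a12 ≤ f.a11 := by
    have := h2 ![-1,1,0] (by simp)
    simp only [TQF.eval] at this
    norm_num [Matrix.cons_val_two, Matrix.vecHead, Matrix.vecTail] at this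
    linarith
  have hvp : f.a13 ≤ f.a11 := by
    have := h3 ![-1,0,1] (by simp)
    simp only [TQF.eval] at this
    norm_num [Matrix.cons_val_two, Matrix.vecHead, Matrix.vecTail] at this
    linarith
  have hw2 : f.a23 ≤ f.a22 := by
    have := h3 ![0,-1,1] (by simp)
    simp only [TQF.eval] at this
    norm_num [Matrix.cons_val_two, Matrix.vecHead, Matrix.vecTail] at this
    linarith
  have hw1 : -f.a22 ≤ f.a23 := by
    have := h3 ![0,1,1] (by simp)
    simp only [TQF.eval] at this
    norm_num [Matrix.cons_val_two, Matrix.vecHead, Matrix.vecTail] at this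
    linarith
  have hL : f.a12 + f.a13 - f.a23 ≤ f.a11 + f.a22 := by
    have := h3 ![-1,1,1] (by simp)
    simp only [TQF.eval] at this
    norm_num [Matrix.cons_val_two, Matrix.vecHead, Matrix.vecTail] at this
    linarith
  have key := schiemann_key f.a11 f.a22 f.a33 f.a12 f.a13 f.a23 hp0.le hpq hqr hu0 hup hv0 hvp
    hw1 hw2 hL
  have hdet : f.gram.det = (f.a11:ℚ)*f.a22*f.a33 + (f.a12:ℚ)*f.a13*f.a23/4
      - (f.a11:ℚ)*f.a23^2/4 - (f.a22:ℚ)*f.a13^2/4 - (f.a33:ℚ)*f.a12^2/4 := by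
    simp [TQF.gram, Matrix.det_fin_three]
    ring
  refine le_trans (min_le_right _ _) (le_trans (min_le_right _ _) ?_)
  rw [hdet]
  have keyQ : (f.a11:ℚ)*f.a23^2 + (f.a22:ℚ)*f.a13^2 + (f.a33:ℚ)*f.a12^2
      ≤ 2*(f.a11:ℚ)*f.a22*f.a33 + (f.a12:ℚ)*f.a13*f.a23 := by exact_mod_cast key
  have hp1 : (1:ℚ) ≤ (f.a11:ℚ) := by exact_mod_cast hp0
  have hq1 : (1:ℚ) ≤ (f.a22:ℚ) := by
    have : (1:ℤ) ≤ f.a22 := le_trans hp0 hpq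
    exact_mod_cast this
  have hr0 : (0:ℚ) ≤ (f.a33:ℚ) := by
    have : (0:ℤ) ≤ f.a33 := by linarith
    exact_mod_cast this
  have h12 : (1:ℚ) ≤ (f.a11:ℚ) * (f.a22:ℚ) := by nlinarith
  have hprod : (0:ℚ) ≤ ((f.a11:ℚ)*(f.a22:ℚ) - 1) * (f.a33:ℚ) :=
    mul_nonneg (by linarith) hr0
  nlinarith [keyQ, hprod]
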